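/- arXiv:1206.0518 — 2 statements merged into one kernel-verified Lean document; each statement's English description precedes it below -/
import Mathlib

section
/- Let (X,T) be a topological dynamical system with metric d such that T is Lipschitz continuous with Lipschitz constant L > 1 (i.e. d(Tx,Ty) ≤ L·d(x,y) for all x,y ∈ X). Then for every subset C ⊆ X, the Hausdorff dimension satisfies H_d(C) ≥ h^B(T,C)/log L. -/
open Set Filter MeasureTheory
open scoped Classical ENNReal

noncomputable section

namespace Lowering

variable {X : Type*} [TopologicalSpace X]

/-- A finite open cover of the whole space. -/
def IsFinOpenCover (U : Finset (Set X)) : Prop :=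
  (∀ u ∈ U, IsOpen u) ∧ ⋃₀ (U : Set (Set X)) = Set.univ

/-- The dynamical refinement `⋁_{i=0}^{n-1} T⁻ⁱ U` of a family of subsets. -/
def dynRefine (T : X → X) (U : Set (Set X)) (n : ℕ) : Set (Set X) :=
  {V | ∃ f : ℕ → Set X, (∀ i < n, f i ∈ U) ∧ V = ⋂ i ∈ Finset.range n, T^[i] ⁻¹' f i}

/-- `N(V, K)`: the minimal cardinality of a finite subfamily of `V` covering `K`
(with the convention `N(V, ∅) = 1`). -/
def coverNum (V : Set (Set X)) (K : Set X) : ℕ :=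
  if K = ∅ then 1
  else sInf {n : ℕ | ∃ F : Finset (Set X), ↑F ⊆ V ∧ K ⊆ ⋃₀ (F : Set (Set X)) ∧ F.card = n}

/-- `h_U(T, K) = limsup_n (1/n) log N(⋁_{i=0}^{n-1} T⁻ⁱU, K)`. -/
def coverEntropyOf (T : X → X) (U : Finset (Set X)) (K : Set X) : EReal :=
  Filter.atTop.limsup fun n : ℕ =>
    ((Real.log (coverNum (dynRefine T (↑U) n) K) / n : ℝ) : EReal)

/-- The covering entropy `h(T, K)` of a subset `K`. -/
def coverEntropy (T : X → X) (K : Set X) : EReal :=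
  ⨆ (U : Finset (Set X)) (_ : IsFinOpenCover U), coverEntropyOf T U K

/-- `n_{T,U}(E)`: the largest `j` (possibly `∞`) such that `Tⁱ E` is contained in some member
of `U` for all `0 ≤ i ≤ j - 1`. -/
def bowenN (T : X → X) (U : Finset (Set X)) (E : Set X) : ℕ∞ :=
  ⨆ j ∈ {j : ℕ | ∀ i < j, ∃ u ∈ U, T^[i] '' E ⊆ u}, (j : ℕ∞)

/-- The weight `exp (-λ n)`, with the conventions `0 ⬝ ∞ = 0`. -/
def expWeight (lam : ℝ) (n : ℕ∞) : ℝ≥0∞ :=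
  if h : n = ⊤ then (if 0 < lam then 0 else if lam < 0 then ⊤ else 1)
  else ENNReal.ofReal (Real.exp (-lam * (n.untop h : ℕ)))

/-- `m_{T,U}(K, λ, k)` (with the paper's conventions for `K = ∅`). -/
def mPre (T : X → X) (U : Finset (Set X)) (K : Set X) (lam : ℝ) (k : ℕ) : ℝ≥0∞ :=
  if K = ∅ then (if lam < 0 then ⊤ else if lam = 0 then 1 else 0)
  else ⨅ (𝓔 : Set (Set X)) (_ : 𝓔.Countable) (_ : K ⊆ ⋃₀ 𝓔)
        (_ : ∀ E ∈ 𝓔, ∃ V ∈ dynRefine T (↑U) k, E ⊆ V),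
      ∑' E : 𝓔, expWeight lam (bowenN T U (E : Set X))

/-- `m_{T,U}(K, λ) = lim_{k → ∞} m_{T,U}(K, λ, k)`, the limit of the nondecreasing
sequence `k ↦ m_{T,U}(K, λ, k)`, i.e. its supremum. -/
def mBowen (T : X → X) (U : Finset (Set X)) (K : Set X) (lam : ℝ) : ℝ≥0∞ :=
  ⨆ k : ℕ, mPre T U K lam k

/-- `h^B_U(T,K) = inf {λ : m_{T,U}(K,λ) = 0}`. -/
def bowenEntropyOf (T : X → X) (U : Finset (Set X)) (K : Set X) : EReal :=
  ⨅ (lam : ℝ) (_ : mBowen T U K lam = 0), (lam : EReal)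

/-- The dimensional (Bowen) entropy `h^B(T, K)` of a subset `K`. -/
def bowenEntropy (T : X → X) (K : Set X) : EReal :=
  ⨆ (U : Finset (Set X)) (_ : IsFinOpenCover U), bowenEntropyOf T U K

/-- Souslin sets: sets of the form `⋃_{(i₁,i₂,…) ∈ ℕ^ℕ} ⋂_k E_{i₁,…,i_k}` with all the
`E_{i₁,…,i_k}` closed. -/
def IsSouslin (K : Set X) : Prop :=
  ∃ E : List ℕ → Set X, (∀ l, IsClosed (E l)) ∧
    K = ⋃ σ : ℕ → ℕ, ⋂ k : ℕ, E (List.ofFn fun i : Fin (k + 1) => σ i)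

def Lowerable (T : X → X) : Prop :=
  ∀ h : ℝ, 0 ≤ h → (h : EReal) ≤ coverEntropy T Set.univ →
    ∃ K : Set X, IsClosed K ∧ coverEntropy T K = (h : EReal)

def HereditarilyLowerable (T : X → X) : Prop :=
  ∀ K : Set X, IsClosed K → ∀ h : ℝ, 0 ≤ h → (h : EReal) ≤ coverEntropy T K →
    ∃ K' ⊆ K, IsClosed K' ∧ coverEntropy T K' = (h : EReal)

def DLowerable (T : X → X) : Prop :=
  ∀ h : ℝ, 0 ≤ h → (h : EReal) ≤ coverEntropy T Set.univ →
    ∃ K : Set X, bowenEntropy T K = (h : EReal)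

def DHereditarilyLowerable (T : X → X) : Prop :=
  ∀ K : Set X, IsSouslin K → ∀ h : ℝ, 0 ≤ h → (h : EReal) ≤ bowenEntropy T K →
    ∃ K' ⊆ K, bowenEntropy T K' = (h : EReal)

/-- `Φ_ε(x) = {y : d(Tⁿx, Tⁿy) ≤ ε for all n ≥ 0}`. -/
def phiSet {Y : Type*} [PseudoMetricSpace Y] (T : Y → Y) (ε : ℝ) (x : Y) : Set Y :=
  {y | ∀ n : ℕ, dist (T^[n] x) (T^[n] y) ≤ ε}

/-- Asymptotic h-expansiveness: `lim_{ε → 0+} sup_x h(T, Φ_ε(x)) = 0`. -/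
def AsympHExpansive {Y : Type*} [MetricSpace Y] (T : Y → Y) : Prop :=
  Filter.Tendsto (fun ε : ℝ => ⨆ x : Y, coverEntropy T (phiSet T ε x))
    (nhdsWithin 0 (Set.Ioi 0)) (nhds (0 : EReal))

/-- `N((U₁)₀ⁿ⁻¹ | (U₂)₀ⁿ⁻¹) = max_{V ∈ (U₂)₀ⁿ⁻¹} N((U₁)₀ⁿ⁻¹, V)`. -/
def relCoverNum (T : X → X) (U1 U2 : Finset (Set X)) (n : ℕ) : ℕ :=
  sSup {k : ℕ | ∃ V ∈ dynRefine T (↑U2) n, k = coverNum (dynRefine T (↑U1) n) V}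

/-- The topologically conditional entropy `h^*(T, X)`. -/
def condTopEntropy (T : X → X) : EReal :=
  ⨅ (U2 : Finset (Set X)) (_ : IsFinOpenCover U2),
    ⨆ (U1 : Finset (Set X)) (_ : IsFinOpenCover U1),
      ((⨅ n : ℕ, Real.log (relCoverNum T U1 U2 (n + 1)) / (n + 1) : ℝ) : EReal)


section AuxLemmas

variable {Y : Type*} [TopologicalSpace Y]

lemma le_bowenN {T : Y → Y} {U : Finset (Set Y)} {E : Set Y} {m : ℕ}
    (h : ∀ i < m, ∃ u ∈ U, T^[i] '' E ⊆ u) : (m : ℕ∞) ≤ bowenN T U E :=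
  le_iSup₂ (f := fun (j : ℕ) (_ : j ∈ {j : ℕ | ∀ i < j, ∃ u ∈ U, T^[i] '' E ⊆ u}) => (j : ℕ∞))
    m h

lemma bowenN_eq_top {T : Y → Y} {U : Finset (Set Y)} {E : Set Y}
    (h : ∀ m : ℕ, ∀ i < m, ∃ u ∈ U, T^[i] '' E ⊆ u) : bowenN T U E = ⊤ := by
  have key : ∀ m : ℕ, (m : ℕ∞) ≤ bowenN T U E := fun m => le_bowenN (h m)
  cases hx : bowenN T U E with
  | top => rfl
  | coe n =>
    have := hx ▸ key (n + 1)
    exfalso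
    have : n + 1 ≤ n := by exact_mod_cast this
    omega

lemma expWeight_le_aux {T : Y → Y} {U : Finset (Set Y)} {E : Set Y} {lam : ℝ} {m : ℕ}
    (hlam : 0 < lam) (h : ∀ i < m, ∃ u ∈ U, T^[i] '' E ⊆ u) :
    expWeight lam (bowenN T U E) ≤ ENNReal.ofReal (Real.exp (-lam * m)) := by
  have hm := le_bowenN h
  rcases eq_or_ne (bowenN T U E) ⊤ with ht | ht
  · rw [expWeight, dif_pos ht, if_pos hlam]
    exact zero_le
  · rw [expWeight, dif_neg ht]
    apply ENNReal.ofReal_le_ofReal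
    apply Real.exp_le_exp.2
    have hmn : m ≤ (bowenN T U E).untop ht := by
      have h2 : bowenN T U E = (((bowenN T U E).untop ht : ℕ) : ℕ∞) := by
        exact_mod_cast (WithTop.coe_untop _ ht).symm
      rw [h2] at hm
      exact_mod_cast hm
    have hcast : (m : ℝ) ≤ ((bowenN T U E).untop ht : ℕ) := by exact_mod_cast hmn
    nlinarith

end AuxLemmas

/-- If `T` is Lipschitz with constant `L > 1` then `H_d(C) ≥ h^B(T, C) / log L`
for every subset `C`. -/

theorem bowenEntropy_le_dimH_mul_log {X : Type*} [MetricSpace X] [CompactSpace X]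
    (T : X ≃ₜ X) (L : ℝ) (hL : 1 < L)
    (hLip : ∀ x y : X, dist (T x) (T y) ≤ L * dist x y) (C : Set X) :
    bowenEntropy (⇑T) C ≤ (dimH C : EReal) * ((Real.log L : ℝ) : EReal) := by
  letI : MeasurableSpace X := borel X
  haveI : BorelSpace X := ⟨rfl⟩
  have hL0 : (0 : ℝ) < L := lt_trans zero_lt_one hL
  have hlogL : 0 < Real.log L := Real.log_pos hL
  -- Lipschitz structure
  have hLipW : LipschitzWith L.toNNReal (⇑T) := by
    apply LipschitzWith.of_dist_le_mul
    intro x y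
    rw [Real.coe_toNNReal L hL0.le]
    exact hLip x y
  -- Main claim: for every s with dimH C < ofReal s, the entropy is at most s * log L.
  have main : ∀ s : ℝ, dimH C < ENNReal.ofReal s →
      bowenEntropy (⇑T) C ≤ ((s * Real.log L : ℝ) : EReal) := by
    intro s hs
    have hs0 : 0 < s := by
      by_contra h
      push_neg at h
      rw [ENNReal.ofReal_eq_zero.2 h] at hs
      exact (not_lt.2 zero_le) hs
    set lam := s * Real.log L with hlamdef
    have hlam0 : 0 < lam := mul_pos hs0 hlogL
    have hzero : ∀ U : Finset (Set X), IsFinOpenCover U → mBowen (⇑T) U C lam = 0 := by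
      intro U hU
      rcases eq_or_ne C ∅ with hC | hC
      · have hpre : ∀ k, mPre (⇑T) U C lam k = 0 := by
          intro k
          rw [mPre, if_pos hC, if_neg (not_lt.2 hlam0.le), if_neg hlam0.ne']
        simp [mBowen, hpre]
      · -- C nonempty, so X is nonempty
        obtain ⟨x₀, hx₀⟩ := Set.nonempty_iff_ne_empty.2 hC
        -- Lebesgue number of the cover U
        obtain ⟨δ, hδ0, hball⟩ := lebesgue_number_lemma_of_metric_sUnion
          (s := (Set.univ : Set X)) (c := (↑U : Set (Set X)))
          isCompact_univ (fun u hu => hU.1 u hu)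
          (by rw [hU.2])
        set δ' := δ / 2 with hδ'def
        have hδ'0 : 0 < δ' := by positivity
        -- Sets of diameter ≤ δ' lie in a member of U
        have hmem : ∀ E : Set X, EMetric.diam E ≤ ENNReal.ofReal δ' → ∃ u ∈ U, E ⊆ u := by
          intro E hE
          rcases E.eq_empty_or_nonempty with rfl | ⟨y, hy⟩
          · obtain ⟨u, hu, _⟩ := hball x₀ (mem_univ x₀)
            exact ⟨u, hu, empty_subset u⟩
          · obtain ⟨u, hu, hsub⟩ := hball y (mem_univ y)
            refine ⟨u, hu, fun z hz => hsub ?_⟩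
            have h1 : edist y z ≤ ENNReal.ofReal δ' :=
              le_trans (EMetric.edist_le_diam_of_mem hy hz) hE
            have h2 : dist y z ≤ δ' := (edist_le_ofReal hδ'0.le).1 h1
            have : dist z y < δ := by rw [dist_comm]; linarith
            exact Metric.mem_ball.2 this
        -- lemma A
        have lemA : ∀ (m : ℕ) (E : Set X), EMetric.diam E ≤ ENNReal.ofReal (δ' / L ^ m) →
            ∀ i ≤ m, ∃ u ∈ U, (⇑T)^[i] '' E ⊆ u := by
          intro m E hE i him
          apply hmem
          have h1 : EMetric.diam ((⇑T)^[i] '' E) ≤ (L.toNNReal ^ i : NNReal) * EMetric.diam E :=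
            (hLipW.iterate i).ediam_image_le E
          have h2 : ((L.toNNReal ^ i : NNReal) : ℝ≥0∞) = ENNReal.ofReal (L ^ i) := by
            rw [ENNReal.ofReal_pow hL0.le]
            rfl
          calc EMetric.diam ((⇑T)^[i] '' E)
              ≤ (L.toNNReal ^ i : NNReal) * EMetric.diam E := h1
            _ ≤ ENNReal.ofReal (L ^ i) * ENNReal.ofReal (δ' / L ^ m) := by
                rw [h2]; exact mul_le_mul_right hE _
            _ = ENNReal.ofReal (L ^ i * (δ' / L ^ m)) := by
                rw [ENNReal.ofReal_mul (by positivity)]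
            _ ≤ ENNReal.ofReal δ' := by
                apply ENNReal.ofReal_le_ofReal
                have hpow : L ^ i ≤ L ^ m := pow_le_pow_right₀ hL.le him
                have : L ^ i * (δ' / L ^ m) ≤ L ^ m * (δ' / L ^ m) := by
                  apply mul_le_mul_of_nonneg_right hpow (by positivity)
                rw [mul_div_cancel₀ δ' (by positivity : (L:ℝ) ^ m ≠ 0)] at this
                exact this
        -- a member of U is needed for empty sets
        obtain ⟨u₀, hu₀, _⟩ := hmem ∅ (by show Metric.ediam (∅ : Set X) ≤ _; simp)
        -- get Hausdorff measure 0
        have hμ0 : μH[s] C = 0 := by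
          have h1 : dimH C < ((s.toNNReal : NNReal) : ℝ≥0∞) := by
            rwa [show ((s.toNNReal : NNReal) : ℝ≥0∞) = ENNReal.ofReal s from rfl]
          have h2 := hausdorffMeasure_of_dimH_lt h1
          rwa [Real.coe_toNNReal s hs0.le] at h2
        -- the scaling constant
        set Cδ : ℝ≥0∞ := ENNReal.ofReal (δ' ^ (-s)) with hCδdef
        have hCδ0 : Cδ ≠ 0 := by
          rw [hCδdef]
          simp only [ne_eq, ENNReal.ofReal_eq_zero, not_le]
          positivity
        have hCδt : Cδ ≠ ⊤ := ENNReal.ofReal_ne_top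
        -- show each mPre is zero
        have hpre : ∀ k, mPre (⇑T) U C lam k = 0 := by
          intro k
          refine nonpos_iff_eq_zero.1 (ENNReal.le_of_forall_pos_le_add fun ε hε _ => ?_)
          rw [zero_add]
          set ε₂ : ℝ≥0∞ := (ε : ℝ≥0∞) / Cδ with hε₂def
          have hε₂0 : 0 < ε₂ := ENNReal.div_pos (by exact_mod_cast hε.ne') hCδt
          set r : ℝ≥0∞ := ENNReal.ofReal (δ' / L ^ k) with hrdef
          have hr0 : 0 < r := by
            rw [hrdef]
            apply ENNReal.ofReal_pos.2
            positivity
          -- extract a cover from the Hausdorff measure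
          rw [MeasureTheory.Measure.hausdorffMeasure_apply] at hμ0
          have hinf : (⨅ (t : ℕ → Set X) (_ : C ⊆ ⋃ n, t n)
              (_ : ∀ n, EMetric.diam (t n) ≤ r),
              ∑' n, ⨆ _ : (t n).Nonempty, EMetric.diam (t n) ^ s) = 0 := by
            refine nonpos_iff_eq_zero.1 ?_
            rw [← hμ0]
            exact le_iSup₂ (f := fun (r' : ℝ≥0∞) (_ : 0 < r') =>
              ⨅ (t : ℕ → Set X) (_ : C ⊆ ⋃ n, t n) (_ : ∀ n, EMetric.diam (t n) ≤ r'),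
                ∑' n, ⨆ _ : (t n).Nonempty, EMetric.diam (t n) ^ s) r hr0
          have hlt : (⨅ (t : ℕ → Set X) (_ : C ⊆ ⋃ n, t n)
              (_ : ∀ n, EMetric.diam (t n) ≤ r),
              ∑' n, ⨆ _ : (t n).Nonempty, EMetric.diam (t n) ^ s) < ε₂ := by
            rw [hinf]; exact hε₂0
          simp only [iInf_lt_iff] at hlt
          obtain ⟨t, hcov, hdiam, hsum⟩ := hlt
          -- each set of the cover lies in a member of the k-th refinement
          have href : ∀ n, ∃ V ∈ dynRefine (⇑T) (↑U) k, t n ⊆ V := by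
            intro n
            have hA : ∀ i, i < k → ∃ u ∈ U, (⇑T)^[i] '' (t n) ⊆ u := fun i hi =>
              lemA k (t n) (hdiam n) i hi.le
            choose! u hu hsub using hA
            refine ⟨⋂ i ∈ Finset.range k, (⇑T)^[i] ⁻¹' (u i), ⟨u, hu, rfl⟩, ?_⟩
            intro y hy
            simp only [Set.mem_iInter, Finset.mem_range]
            intro i hi
            exact hsub i hi (Set.mem_image_of_mem _ hy)
          -- weight estimate for each set of the cover
          have hbound : ∀ n, expWeight lam (bowenN (⇑T) U (t n)) ≤
              Cδ * ⨆ _ : (t n).Nonempty, EMetric.diam (t n) ^ s := by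
            intro n
            rcases (t n).eq_empty_or_nonempty with he | hne
            · have htop : bowenN (⇑T) U (t n) = ⊤ := by
                apply bowenN_eq_top
                intro m i _
                exact ⟨u₀, hu₀, by rw [he]; simp⟩
              rw [expWeight, dif_pos htop, if_pos hlam0]
              exact zero_le
            · rw [iSup_pos hne]
              rcases eq_or_ne (EMetric.diam (t n)) 0 with hd0 | hd0
              · have htop : bowenN (⇑T) U (t n) = ⊤ := by
                  apply bowenN_eq_top
                  intro m i him
                  exact lemA m (t n) (by rw [hd0]; exact zero_le) i him.le
                rw [expWeight, dif_pos htop, if_pos hlam0]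
                exact zero_le
              · -- main case: positive finite diameter
                set d : ℝ := (EMetric.diam (t n)).toReal with hddef
                have hdfin : EMetric.diam (t n) ≠ ⊤ :=
                  ((hdiam n).trans_lt ENNReal.ofReal_lt_top).ne
                have hd : 0 < d := ENNReal.toReal_pos hd0 hdfin
                have hdiameq : EMetric.diam (t n) = ENNReal.ofReal d :=
                  (ENNReal.ofReal_toReal hdfin).symm
                have hdle : d ≤ δ' / L ^ k := by
                  have h3 := hdiam n
                  rw [hdiameq, hrdef] at h3
                  exact (ENNReal.ofReal_le_ofReal_iff (by positivity)).1 h3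
                have hratio : (L:ℝ) ^ k ≤ δ' / d := by
                  rw [le_div_iff₀ hd]
                  have := (le_div_iff₀ (pow_pos hL0 k)).1 hdle
                  linarith
                have hratio1 : 1 ≤ δ' / d := le_trans (one_le_pow₀ hL.le) hratio
                have hlb0 : 0 ≤ Real.logb L (δ' / d) := Real.logb_nonneg hL hratio1
                set m : ℕ := ⌊Real.logb L (δ' / d)⌋₊ with hmdef
                have hm1 : (L:ℝ) ^ m ≤ δ' / d := by
                  have h1 : (m : ℝ) ≤ Real.logb L (δ' / d) := Nat.floor_le hlb0
                  calc (L:ℝ) ^ m = L ^ (m : ℝ) := (Real.rpow_natCast L m).symm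
                    _ ≤ L ^ Real.logb L (δ' / d) :=
                        (Real.rpow_le_rpow_left_iff hL).2 h1
                    _ = δ' / d := Real.rpow_logb hL0 hL.ne' (by positivity)
                have hdm : d ≤ δ' / L ^ m := by
                  rw [le_div_iff₀ (pow_pos hL0 m)]
                  have := (le_div_iff₀ hd).1 hm1
                  linarith
                have hw : expWeight lam (bowenN (⇑T) U (t n)) ≤
                    ENNReal.ofReal (Real.exp (-lam * (m + 1 : ℕ))) := by
                  apply expWeight_le_aux hlam0
                  intro i hi
                  exact lemA m (t n)
                    (by rw [hdiameq]; exact ENNReal.ofReal_le_ofReal hdm) i (by omega)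
                have hexp : Real.exp (-lam * (m + 1 : ℕ)) ≤ d ^ s * δ' ^ (-s) := by
                  have hlog : Real.logb L (δ' / d) < (m : ℝ) + 1 := Nat.lt_floor_add_one _
                  have hstep : -lam * ((m + 1 : ℕ) : ℝ) ≤ -(lam * Real.logb L (δ' / d)) := by
                    push_cast
                    nlinarith
                  have heq : Real.exp (-(lam * Real.logb L (δ' / d))) = d ^ s * δ' ^ (-s) := by
                    rw [Real.rpow_def_of_pos hd, Real.rpow_def_of_pos hδ'0, ← Real.exp_add]
                    congr 1
                    rw [Real.logb, hlamdef]
                    have hd'ne : Real.log (δ' / d) = Real.log δ' - Real.log d :=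
                      Real.log_div (by positivity) hd.ne'
                    rw [hd'ne]
                    field_simp
                    ring
                  calc Real.exp (-lam * ((m + 1 : ℕ) : ℝ))
                      ≤ Real.exp (-(lam * Real.logb L (δ' / d))) := Real.exp_le_exp.2 hstep
                    _ = d ^ s * δ' ^ (-s) := heq
                calc expWeight lam (bowenN (⇑T) U (t n))
                    ≤ ENNReal.ofReal (Real.exp (-lam * (m + 1 : ℕ))) := hw
                  _ ≤ ENNReal.ofReal (d ^ s * δ' ^ (-s)) := ENNReal.ofReal_le_ofReal hexp
                  _ = Cδ * ENNReal.ofReal (d ^ s) := by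
                      rw [ENNReal.ofReal_mul (by positivity), mul_comm, hCδdef]
                  _ = Cδ * EMetric.diam (t n) ^ s := by
                      rw [hdiameq, ENNReal.ofReal_rpow_of_pos hd]
          -- put everything together
          have step1 : mPre (⇑T) U C lam k ≤
              ∑' (E : (Set.range t : Set (Set X))), expWeight lam (bowenN (⇑T) U (E : Set X)) := by
            rw [mPre, if_neg hC]
            refine iInf_le_of_le (Set.range t) (iInf_le_of_le (countable_range t)
              (iInf_le_of_le ?_ (iInf_le_of_le ?_ le_rfl)))
            · rwa [sUnion_range]
            · rintro E ⟨n, rfl⟩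
              exact href n
          have hsurj : Function.Surjective
              (fun n : ℕ => (⟨t n, Set.mem_range_self n⟩ : (Set.range t : Set (Set X)))) := by
            rintro ⟨E, n, rfl⟩
            exact ⟨n, rfl⟩
          calc mPre (⇑T) U C lam k
              ≤ ∑' (E : (Set.range t : Set (Set X))), expWeight lam (bowenN (⇑T) U (E : Set X)) :=
                step1
            _ ≤ ∑' n : ℕ, expWeight lam (bowenN (⇑T) U (t n)) :=
                ENNReal.tsum_le_tsum_comp_of_surjective hsurj _
            _ ≤ ∑' n : ℕ, Cδ * ⨆ _ : (t n).Nonempty, EMetric.diam (t n) ^ s :=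
                ENNReal.tsum_le_tsum hbound
            _ = Cδ * ∑' n : ℕ, ⨆ _ : (t n).Nonempty, EMetric.diam (t n) ^ s :=
                ENNReal.tsum_mul_left
            _ ≤ Cδ * ε₂ := mul_le_mul_right hsum.le _
            _ = (ε : ℝ≥0∞) := ENNReal.mul_div_cancel hCδ0 hCδt
        simp [mBowen, hpre]
    rw [bowenEntropy]
    refine iSup₂_le fun U hU => ?_
    rw [bowenEntropyOf]
    exact iInf₂_le lam (hzero U hU)
  -- conclude
  rcases eq_or_ne (dimH C) ⊤ with htop | hfin
  · rw [htop, EReal.coe_ennreal_top, EReal.top_mul_of_pos (by exact_mod_cast hlogL)]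
    exact le_top
  · by_contra hcon
    push_neg at hcon
    obtain ⟨c, hc1, hc2⟩ := EReal.lt_iff_exists_real_btwn.1 hcon
    have hrhs : ((dimH C : EReal) * ((Real.log L : ℝ) : EReal)) =
        (((dimH C).toReal * Real.log L : ℝ) : EReal) := by
      conv_lhs => rw [← ENNReal.ofReal_toReal hfin]
      rw [EReal.coe_ennreal_ofReal, max_eq_left ENNReal.toReal_nonneg, ← EReal.coe_mul]
    rw [hrhs] at hc1
    have hc1' : (dimH C).toReal * Real.log L < c := by exact_mod_cast hc1
    set s : ℝ := c / Real.log L with hsdef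
    have hts : (dimH C).toReal < s := by
      rw [hsdef, lt_div_iff₀ hlogL]
      exact hc1'
    have hdlt : dimH C < ENNReal.ofReal s := by
      conv_lhs => rw [← ENNReal.ofReal_toReal hfin]
      exact ENNReal.ofReal_lt_ofReal_iff_of_nonneg ENNReal.toReal_nonneg |>.2 hts
    have := main s hdlt
    rw [hsdef, div_mul_cancel₀ c hlogL.ne'] at this
    exact absurd hc2 (not_lt.2 this)

end Lowering
end
end

section
/- Let (X,T) be a topological dynamical system with metric d. If there exist ε > 0 and L > 1 such that d(Tx,Ty) ≥ L·d(x,y) whenever d(x,y) < ε, then for every subset C ⊆ X the Hausdorff dimension satisfies H_d(C) ≤ h^B(T,C)/log L. -/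
open Set Filter MeasureTheory
open scoped Classical ENNReal

noncomputable section

namespace Lowering

variable {X : Type*} [TopologicalSpace X]

section Aux

variable {Y : Type*} [MetricSpace Y]

lemma iter_expand {T : Y → Y} {ε L : ℝ}
    (hExp : ∀ x y : Y, dist x y < ε → L * dist x y ≤ dist (T x) (T y)) (hL : 1 < L)
    {x y : Y} : ∀ {n : ℕ}, (∀ i < n, dist (T^[i] x) (T^[i] y) < ε) →
      L ^ n * dist x y ≤ dist (T^[n] x) (T^[n] y) := by
  intro n
  induction n with
  | zero => simp
  | succ n ih =>
    intro h
    have h1 : L ^ n * dist x y ≤ dist (T^[n] x) (T^[n] y) := ih fun i hi => h i (by omega)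
    have h2 := hExp (T^[n] x) (T^[n] y) (h n (by omega))
    rw [Function.iterate_succ_apply', Function.iterate_succ_apply']
    have hL0 : (0:ℝ) < L := lt_trans one_pos hL
    calc L ^ (n+1) * dist x y = L * (L ^ n * dist x y) := by ring
      _ ≤ L * dist (T^[n] x) (T^[n] y) := by
          exact mul_le_mul_of_nonneg_left h1 hL0.le
      _ ≤ _ := h2

lemma bowenN_prop {X : Type*} (T : X → X) (U : Finset (Set X)) (E : Set X) {n : ℕ}
    (h : (n : ℕ∞) ≤ bowenN T U E) : ∀ i < n, ∃ u ∈ U, T^[i] '' E ⊆ u := by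
  by_contra hc
  push_neg at hc
  obtain ⟨i, hi, hiu⟩ := hc
  have hb : bowenN T U E ≤ (i : ℕ∞) := by
    refine iSup₂_le fun j hj => ?_
    by_contra hji
    push_neg at hji
    have hij : i < j := by exact_mod_cast hji
    obtain ⟨u, hu, hsub⟩ := hj i hij
    exact hiu u hu hsub
  have := h.trans hb
  have : n ≤ i := by exact_mod_cast this
  omega

lemma le_bowenN_of_refine {X : Type*} [TopologicalSpace X] {T : X → X} {U : Finset (Set X)}
    {k : ℕ} {E V : Set X} (hV : V ∈ dynRefine T (↑U) k) (hE : E ⊆ V) :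
    (k : ℕ∞) ≤ bowenN T U E := by
  obtain ⟨f, hf, rfl⟩ := hV
  have hk : k ∈ {j : ℕ | ∀ i < j, ∃ u ∈ U, T^[i] '' E ⊆ u} := by
    intro i hi
    refine ⟨f i, hf i hi, ?_⟩
    rintro z ⟨w, hw, rfl⟩
    have := hE hw
    rw [Set.mem_iInter₂] at this
    exact this i (Finset.mem_range.2 hi)
  exact le_iSup₂ (f := fun (j : ℕ) (_ : j ∈ _) => (j : ℕ∞)) k hk

lemma dist_le_of_bowenN {T : Y → Y} {ε L r₀ : ℝ}
    (hExp : ∀ x y : Y, dist x y < ε → L * dist x y ≤ dist (T x) (T y)) (hL : 1 < L)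
    (h2r : 2 * r₀ < ε) {U : Finset (Set Y)}
    (hU : ∀ u ∈ U, ∀ a ∈ u, ∀ b ∈ u, dist a b ≤ 2 * r₀)
    {E : Set Y} {n : ℕ} (h : ((n + 1 : ℕ) : ℕ∞) ≤ bowenN T U E)
    {x y : Y} (hx : x ∈ E) (hy : y ∈ E) : dist x y ≤ 2 * r₀ / L ^ n := by
  have hp := bowenN_prop T U E h
  have hd : ∀ i < n + 1, dist (T^[i] x) (T^[i] y) ≤ 2 * r₀ := by
    intro i hi
    obtain ⟨u, hu, hsub⟩ := hp i hi
    exact hU u hu _ (hsub ⟨x, hx, rfl⟩) _ (hsub ⟨y, hy, rfl⟩)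
  have hit := iter_expand hExp hL (x := x) (y := y) (n := n)
    (fun i hi => lt_of_le_of_lt (hd i (by omega)) h2r)
  have h2 := hd n (by omega)
  have hpow : (0:ℝ) < L ^ n := pow_pos (lt_trans one_pos hL) n
  rw [le_div_iff₀ hpow]
  calc dist x y * L ^ n = L ^ n * dist x y := by ring
    _ ≤ dist (T^[n] x) (T^[n] y) := hit
    _ ≤ 2 * r₀ := h2

lemma diam_eq_zero_of_bowenN_top {T : Y → Y} {ε L r₀ : ℝ}
    (hExp : ∀ x y : Y, dist x y < ε → L * dist x y ≤ dist (T x) (T y)) (hL : 1 < L)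
    (h2r : 2 * r₀ < ε) {U : Finset (Set Y)}
    (hU : ∀ u ∈ U, ∀ a ∈ u, ∀ b ∈ u, dist a b ≤ 2 * r₀)
    {E : Set Y} (h : bowenN T U E = ⊤) : EMetric.diam E = 0 := by
  rw [EMetric.diam, EMetric.diam_eq_zero_iff]
  intro x hx y hy
  have hL0 : (0:ℝ) < L := lt_trans one_pos hL
  have hdn : ∀ n : ℕ, dist x y ≤ 2 * r₀ / L ^ n := by
    intro n
    exact dist_le_of_bowenN hExp hL h2r hU (h ▸ le_top) hx hy
  have htend : Filter.Tendsto (fun n : ℕ => 2 * r₀ / L ^ n) Filter.atTop (nhds 0) := by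
    have h1 : Filter.Tendsto (fun n : ℕ => (2 * r₀) * (L⁻¹) ^ n) Filter.atTop (nhds ((2*r₀) * 0)) :=
      (tendsto_pow_atTop_nhds_zero_of_lt_one (inv_nonneg.2 hL0.le)
        (inv_lt_one_of_one_lt₀ hL)).const_mul _
    simpa [div_eq_mul_inv, inv_pow] using h1
  have : dist x y ≤ 0 := ge_of_tendsto htend (Filter.Eventually.of_forall hdn)
  exact dist_le_zero.mp this

lemma expWeight_coe (lam : ℝ) (m : ℕ) :
    expWeight lam ((m : ℕ∞)) = ENNReal.ofReal (Real.exp (-lam * m)) := by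
  simp only [expWeight]
  rw [dif_neg (show ((m : ℕ) : ℕ∞) ≠ ⊤ by simp)]
  rfl

lemma calc_rpow {r L s : ℝ} (hr : 0 < r) (hL : 1 < L) (n : ℕ) :
    (r / L ^ n) ^ s = (r * L) ^ s * Real.exp (-(s * Real.log L) * ((n : ℝ) + 1)) := by
  have hL0 : (0:ℝ) < L := lt_trans one_pos hL
  have hpow : (0:ℝ) < L ^ (n+1) := pow_pos hL0 _
  have h1 : r / L ^ n = (r * L) / L ^ (n + 1) := by
    field_simp
    ring
  rw [h1, Real.div_rpow (by positivity) hpow.le]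
  have h2 : (L ^ (n+1) : ℝ) ^ s = Real.exp (s * Real.log L * ((n:ℝ) + 1)) := by
    rw [Real.rpow_def_of_pos hpow, Real.log_pow]
    push_cast
    ring_nf
  have h3 : -(s * Real.log L) * ((n : ℝ) + 1) = -(s * Real.log L * ((n : ℝ) + 1)) := by
    ring
  rw [h2, h3, Real.exp_neg, div_eq_mul_inv]

lemma diam_rpow_le {T : Y → Y} {ε L r₀ s : ℝ}
    (hExp : ∀ x y : Y, dist x y < ε → L * dist x y ≤ dist (T x) (T y)) (hL : 1 < L)
    (hr₀ : 0 < r₀) (h2r : 2 * r₀ < ε) {U : Finset (Set Y)}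
    (hU : ∀ u ∈ U, ∀ a ∈ u, ∀ b ∈ u, dist a b ≤ 2 * r₀) (hs : 0 < s)
    {E : Set Y} {k : ℕ} (hk : ((k + 1 : ℕ) : ℕ∞) ≤ bowenN T U E) :
    EMetric.diam E ^ s ≤
      ENNReal.ofReal ((2 * r₀ * L) ^ s) * expWeight (s * Real.log L) (bowenN T U E) := by
  have hL0 : (0:ℝ) < L := lt_trans one_pos hL
  rcases eq_or_ne (bowenN T U E) ⊤ with htop | hfin
  · rw [diam_eq_zero_of_bowenN_top hExp hL h2r hU htop, ENNReal.zero_rpow_of_pos hs]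
    exact zero_le
  · obtain ⟨m, hm⟩ : ∃ m : ℕ, bowenN T U E = ((m : ℕ) : ℕ∞) := by
      obtain ⟨m, hm⟩ := WithTop.ne_top_iff_exists.1 hfin
      exact ⟨m, hm.symm⟩
    have hkm : k + 1 ≤ m := by
      rw [hm] at hk
      exact_mod_cast hk
    obtain ⟨n, rfl⟩ : ∃ n, m = n + 1 := ⟨m - 1, by omega⟩
    have hdist : ∀ x ∈ E, ∀ y ∈ E, dist x y ≤ 2 * r₀ / L ^ n := fun x hx y hy =>
      dist_le_of_bowenN hExp hL h2r hU (le_of_eq hm.symm) hx hy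
    have hdiam : EMetric.diam E ≤ ENNReal.ofReal (2 * r₀ / L ^ n) := by
      refine EMetric.diam_le fun x hx y hy => ?_
      rw [edist_dist]
      exact ENNReal.ofReal_le_ofReal (hdist x hx y hy)
    have hdpos : (0:ℝ) < 2 * r₀ / L ^ n := by positivity
    calc EMetric.diam E ^ s ≤ ENNReal.ofReal (2 * r₀ / L ^ n) ^ s :=
          ENNReal.rpow_le_rpow hdiam hs.le
      _ = ENNReal.ofReal ((2 * r₀ / L ^ n) ^ s) := ENNReal.ofReal_rpow_of_pos hdpos
      _ = ENNReal.ofReal ((2 * r₀ * L) ^ s *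
            Real.exp (-(s * Real.log L) * ((n : ℝ) + 1))) := by
          rw [calc_rpow (by positivity) hL]
      _ = ENNReal.ofReal ((2 * r₀ * L) ^ s) *
            ENNReal.ofReal (Real.exp (-(s * Real.log L) * ((n : ℝ) + 1))) :=
          ENNReal.ofReal_mul (by positivity)
      _ = _ := by
          rw [hm, expWeight_coe]
          congr 3
          push_cast
          ring

lemma one_le_expWeight {lam : ℝ} (hlam : lam ≤ 0) (n : ℕ∞) : 1 ≤ expWeight lam n := by
  rw [expWeight]
  split_ifs with h h1 h2
  · linarith
  · exact le_top
  · exact le_rfl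
  · rw [ENNReal.one_le_ofReal]
    refine Real.one_le_exp ?_
    have : (0:ℝ) ≤ (n.untop h : ℕ) := Nat.cast_nonneg _
    nlinarith

end Aux

/-- If `d(Tx, Ty) ≥ L d(x, y)` whenever `d(x, y) < ε`, with `ε > 0`, `L > 1`, then
`H_d(C) ≤ h^B(T, C) / log L` for every subset `C`. -/
theorem dimH_mul_log_le_bowenEntropy {X : Type*} [MetricSpace X] [CompactSpace X]
    (T : X ≃ₜ X) (ε L : ℝ) (hε : 0 < ε) (hL : 1 < L)
    (hExp : ∀ x y : X, dist x y < ε → L * dist x y ≤ dist (T x) (T y)) (C : Set X) :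
    (dimH C : EReal) * ((Real.log L : ℝ) : EReal) ≤ bowenEntropy (⇑T) C := by
  borelize X
  have hlogL : 0 < Real.log L := Real.log_pos hL
  set r₀ : ℝ := ε / 3 with hr₀def
  have hr₀ : 0 < r₀ := by positivity
  have h2r : 2 * r₀ < ε := by rw [hr₀def]; linarith
  obtain ⟨St, hSt⟩ := (isCompact_univ (X := X)).elim_finite_subcover
    (fun x : X => Metric.ball x r₀) (fun x => Metric.isOpen_ball)
    (fun x _ => Set.mem_iUnion.2 ⟨x, Metric.mem_ball_self hr₀⟩)
  set U : Finset (Set X) := St.image (fun x => Metric.ball x r₀) with hUdef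
  have hUopen : IsFinOpenCover U := by
    constructor
    · intro u hu
      rw [hUdef, Finset.mem_image] at hu
      obtain ⟨x, _, rfl⟩ := hu
      exact Metric.isOpen_ball
    · apply Set.eq_univ_of_forall
      intro z
      have hz := hSt (Set.mem_univ z)
      rw [Set.mem_iUnion₂] at hz
      obtain ⟨x, hx, hzx⟩ := hz
      exact ⟨Metric.ball x r₀, by
        simp only [hUdef, Finset.coe_image, Set.mem_image, Finset.mem_coe]
        exact ⟨x, hx, rfl⟩, hzx⟩
  have hUdiam : ∀ u ∈ U, ∀ a ∈ u, ∀ b ∈ u, dist a b ≤ 2 * r₀ := by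
    intro u hu a ha b hb
    rw [hUdef, Finset.mem_image] at hu
    obtain ⟨x, _, rfl⟩ := hu
    have ha' := Metric.mem_ball.1 ha
    have hb' := Metric.mem_ball.1 hb
    have htri : dist a b ≤ dist a x + dist x b := dist_triangle a x b
    rw [dist_comm x b] at htri
    linarith
  rw [bowenEntropy]
  refine le_trans ?_
    (le_iSup₂ (f := fun (V : Finset (Set X)) (_ : IsFinOpenCover V) =>
      bowenEntropyOf (⇑T) V C) U hUopen)
  rw [bowenEntropyOf]
  refine le_iInf₂ fun lam hlam0 => ?_
  have hmP : ∀ k, mPre (⇑T) U C lam k = 0 := by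
    rw [mBowen, ENNReal.iSup_eq_zero] at hlam0
    exact hlam0
  rcases eq_or_ne C ∅ with hC | hC
  · have h0 := hmP 0
    rw [mPre, if_pos hC] at h0
    have hlampos : 0 < lam := by
      by_contra hn
      push_neg at hn
      rcases lt_or_eq_of_le hn with h | h
      · simp [h] at h0
      · simp [← h] at h0
    subst hC
    rw [dimH_empty]
    rw [EReal.coe_ennreal_zero, zero_mul]
    exact_mod_cast hlampos.le
  · obtain ⟨x₀, hx₀⟩ := Set.nonempty_iff_ne_empty.2 hC
    have hlampos : 0 < lam := by
      by_contra hn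
      push_neg at hn
      have h1 : (1 : ℝ≥0∞) ≤ mPre (⇑T) U C lam 0 := by
        rw [mPre, if_neg hC]
        refine le_iInf fun 𝓔 => le_iInf fun _ => le_iInf fun hcov => le_iInf fun _ => ?_
        obtain ⟨E, hE, _⟩ := hcov hx₀
        exact le_trans (one_le_expWeight hn _) (ENNReal.le_tsum (⟨E, hE⟩ : 𝓔))
      rw [hmP 0] at h1
      exact absurd h1 (by simp)
    set s : ℝ := lam / Real.log L with hs_def
    have hs : 0 < s := div_pos hlampos hlogL
    have hslam : s * Real.log L = lam := div_mul_cancel₀ lam hlogL.ne'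
    set c₀ : ℝ≥0∞ := ENNReal.ofReal ((2 * r₀ * L) ^ s) with hc₀def
    have hc₀0 : c₀ ≠ 0 := by
      rw [hc₀def, Ne, ENNReal.ofReal_eq_zero, not_le]
      positivity
    have hc₀top : c₀ ≠ ⊤ := ENNReal.ofReal_ne_top
    have hmu : μH[s] C = 0 := by
      refine le_antisymm ?_ zero_le
      refine ENNReal.le_of_forall_pos_le_add fun η hη _ => ?_
      rw [zero_add]
      set δ : ℝ≥0∞ := (η : ℝ≥0∞) / c₀ with hδ
      have hδpos : 0 < δ := ENNReal.div_pos (by exact_mod_cast hη.ne') hc₀top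
      have hex : ∀ k : ℕ, ∃ 𝓔 : Set (Set X), 𝓔.Countable ∧ C ⊆ ⋃₀ 𝓔 ∧
          (∀ E ∈ 𝓔, ∃ V ∈ dynRefine (⇑T) (↑U) (k + 1), E ⊆ V) ∧
          ∑' E : 𝓔, expWeight lam (bowenN (⇑T) U (E : Set X)) < δ := by
        intro k
        have hlt := lt_of_le_of_lt (le_of_eq (hmP (k + 1))) hδpos
        rw [mPre, if_neg hC] at hlt
        simp only [iInf_lt_iff] at hlt
        obtain ⟨𝓔, hcnt, hcov, href, hsum⟩ := hlt
        exact ⟨𝓔, hcnt, hcov, href, hsum⟩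
      choose 𝓔 hcnt hcov href hsum using hex
      haveI : ∀ k : ℕ, Countable (𝓔 k) := fun k => (hcnt k).to_subtype
      have hbN : ∀ (k : ℕ) (E : 𝓔 k), ((k + 1 : ℕ) : ℕ∞) ≤ bowenN (⇑T) U (E : Set X) := by
        intro k E
        obtain ⟨V, hV, hEV⟩ := href k E E.2
        exact le_bowenN_of_refine hV hEV
      have htend : Filter.Tendsto (fun k : ℕ => ENNReal.ofReal (2 * r₀ / L ^ k))
          Filter.atTop (nhds 0) := by
        have hL0 : (0 : ℝ) < L := lt_trans one_pos hL
        have h1 : Filter.Tendsto (fun k : ℕ => (2 * r₀) * (L⁻¹) ^ k) Filter.atTop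
            (nhds ((2 * r₀) * 0)) :=
          (tendsto_pow_atTop_nhds_zero_of_lt_one (inv_nonneg.2 hL0.le)
            (inv_lt_one_of_one_lt₀ hL)).const_mul _
        have h2 : Filter.Tendsto (fun k : ℕ => 2 * r₀ / L ^ k) Filter.atTop (nhds 0) := by
          simpa [div_eq_mul_inv, inv_pow] using h1
        simpa using ENNReal.tendsto_ofReal h2
      have key := MeasureTheory.Measure.hausdorffMeasure_le_liminf_tsum (X := X) s C
        (fun k : ℕ => ENNReal.ofReal (2 * r₀ / L ^ k)) htend
        (fun (k : ℕ) (E : 𝓔 k) => (E : Set X))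
        (Filter.Eventually.of_forall fun k => fun E => by
          refine EMetric.diam_le fun x hx y hy => ?_
          rw [edist_dist]
          exact ENNReal.ofReal_le_ofReal
            (dist_le_of_bowenN hExp hL h2r hUdiam (hbN k E) hx hy))
        (Filter.Eventually.of_forall fun k => by
          have := hcov k
          rwa [Set.sUnion_eq_iUnion] at this)
      refine key.trans ?_
      refine Filter.liminf_le_of_frequently_le' (Filter.Frequently.of_forall fun k => ?_)
      calc ∑' E : 𝓔 k, EMetric.diam (E : Set X) ^ s
          ≤ ∑' E : 𝓔 k, c₀ * expWeight lam (bowenN (⇑T) U (E : Set X)) := by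
            refine ENNReal.tsum_le_tsum fun E => ?_
            have := diam_rpow_le hExp hL hr₀ h2r hUdiam hs (hbN k E)
            rwa [hslam] at this
        _ = c₀ * ∑' E : 𝓔 k, expWeight lam (bowenN (⇑T) U (E : Set X)) :=
            ENNReal.tsum_mul_left
        _ ≤ c₀ * δ := mul_le_mul_right (hsum k).le _
        _ = η := by rw [hδ, ENNReal.mul_div_cancel hc₀0 hc₀top]
    have hdim : dimH C ≤ ENNReal.ofReal s := by
      have hmu' : μH[(s.toNNReal : ℝ)] C = 0 := by
        rwa [Real.coe_toNNReal s hs.le]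
      have hne : μH[(s.toNNReal : ℝ)] C ≠ ⊤ := by
        rw [hmu']; exact ENNReal.zero_ne_top
      have := dimH_le_of_hausdorffMeasure_ne_top hne
      simpa [ENNReal.ofReal] using this
    have h1 : dimH C * ENNReal.ofReal (Real.log L) ≤ ENNReal.ofReal lam := by
      calc dimH C * ENNReal.ofReal (Real.log L)
          ≤ ENNReal.ofReal s * ENNReal.ofReal (Real.log L) := mul_le_mul_left hdim _
        _ = ENNReal.ofReal (s * Real.log L) := (ENNReal.ofReal_mul hs.le).symm
        _ = ENNReal.ofReal lam := by rw [hslam]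
    calc (dimH C : EReal) * ((Real.log L : ℝ) : EReal)
        = ((dimH C * ENNReal.ofReal (Real.log L) : ℝ≥0∞) : EReal) := by
          rw [EReal.coe_ennreal_mul, EReal.coe_ennreal_ofReal, max_eq_left hlogL.le]
      _ ≤ ((ENNReal.ofReal lam : ℝ≥0∞) : EReal) := EReal.coe_ennreal_le_coe_ennreal_iff.2 h1
      _ = (lam : EReal) := by rw [EReal.coe_ennreal_ofReal, max_eq_left hlampos.le]

end Lowering
end
end
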